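/- Let b > 0 and 0 < p < 1, and define q0 = [(9-p)√((9-p)(1-p)) + 27 - 18p - p^2]/(8b). If q > q0, then the cubic f(s) = s^3 - p s^2 - q b (s - 1) has exactly two roots in the interval (1, ∞). -/

import Mathlib

set_option maxHeartbeats 1000000 in
/-- For `b > 0`, `0 < p < 1` and `q > q0`, the cubic
`f(s) = s^3 - p s^2 - q b (s - 1)` has exactly two roots in `(1, ∞)`. -/
theorem cubic_two_roots_gt_one (b p q : ℝ) (hb : 0 < b) (hp0 : 0 < p) (hp1 : p < 1)
    (q0 : ℝ)
    (hq0 : q0 = ((9 - p) * Real.sqrt ((9 - p) * (1 - p)) + 27 - 18 * p - p ^ 2) / (8 * b))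
    (hq : q0 < q)
    (f : ℝ → ℝ) (hf : ∀ s, f s = s ^ 3 - p * s ^ 2 - q * b * (s - 1)) :
    ∃ s₁ s₂ : ℝ, 1 < s₁ ∧ s₁ < s₂ ∧ f s₁ = 0 ∧ f s₂ = 0 ∧
      ∀ s, 1 < s → f s = 0 → s = s₁ ∨ s = s₂ := by
  set r : ℝ := Real.sqrt ((9 - p) * (1 - p)) with hrdef
  have hprod : 0 ≤ (9 - p) * (1 - p) := by nlinarith
  have hr2 : r ^ 2 = (9 - p) * (1 - p) := Real.sq_sqrt hprod
  have hr0 : 0 ≤ r := Real.sqrt_nonneg _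
  have hrgt : 1 - p < r := by nlinarith
  -- the tangency value c0' = q0 * b
  set c0 : ℝ := (27 - 18 * p - p ^ 2 + (9 - p) * r) / 8 with hc0def
  have hq0b : q0 * b = c0 := by
    rw [hq0, hc0def]
    field_simp
    ring
  have hc0pos : 0 < c0 := by
    rw [hc0def]
    nlinarith [mul_nonneg (by linarith : (0:ℝ) ≤ 9 - p) hr0]
  have hqb : c0 < q * b := by
    rw [← hq0b]
    exact mul_lt_mul_of_pos_right hq hb
  have hqbpos : 0 < q * b := lt_trans hc0pos hqb
  -- the tangency point
  set t : ℝ := (3 + p + r) / 4 with htdef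
  have ht1 : 1 < t := by rw [htdef]; linarith
  have hid : t ^ 3 - p * t ^ 2 - c0 * (t - 1) = 0 := by
    rw [htdef, hc0def]
    linear_combination ((r - 9 + p) / 64) * hr2
  have hft : f t < 0 := by
    rw [hf t]
    nlinarith [hid, mul_pos (by linarith : (0:ℝ) < q * b - c0) (by linarith : (0:ℝ) < t - 1)]
  have hf1 : 0 < f 1 := by rw [hf 1]; nlinarith
  have hcont : Continuous f := by
    have : f = fun s => s ^ 3 - p * s ^ 2 - q * b * (s - 1) := funext hf
    rw [this]; continuity
  -- a large point where f is positive
  set M : ℝ := t + q * b + 1 with hMdef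
  have hMt : t < M := by rw [hMdef]; linarith
  have hM1 : 1 < M := lt_trans ht1 hMt
  have hfM : 0 < f M := by
    rw [hf M]
    have h1 : q * b < M - p := by rw [hMdef]; linarith
    have hA : q * b * (M - 1) < (M - p) * (M - 1) :=
      mul_lt_mul_of_pos_right h1 (by linarith)
    have hB : (M - p) * (M - 1) < (M - p) * M ^ 2 :=
      mul_lt_mul_of_pos_left (by nlinarith [sq_nonneg (M - 1)]) (by linarith)
    nlinarith [hA, hB]
  -- first root in (1, t)
  obtain ⟨s₁, hs₁mem, hs₁⟩ : ∃ s₁ ∈ Set.Ioo (1:ℝ) t, f s₁ = 0 := by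
    have := intermediate_value_Ioo' (le_of_lt ht1) hcont.continuousOn
      (show (0:ℝ) ∈ Set.Ioo (f t) (f 1) from ⟨hft, hf1⟩)
    obtain ⟨s₁, hmem, hval⟩ := this
    exact ⟨s₁, hmem, hval⟩
  -- second root in (t, M)
  obtain ⟨s₂, hs₂mem, hs₂⟩ : ∃ s₂ ∈ Set.Ioo t M, f s₂ = 0 := by
    have := intermediate_value_Ioo (le_of_lt hMt) hcont.continuousOn
      (show (0:ℝ) ∈ Set.Ioo (f t) (f M) from ⟨hft, hfM⟩)
    obtain ⟨s₂, hmem, hval⟩ := this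
    exact ⟨s₂, hmem, hval⟩
  obtain ⟨h1s₁, hs₁t⟩ := hs₁mem
  obtain ⟨hts₂, hs₂M⟩ := hs₂mem
  have hs₁s₂ : s₁ < s₂ := lt_trans hs₁t hts₂
  refine ⟨s₁, s₂, h1s₁, hs₁s₂, hs₁, hs₂, ?_⟩
  intro s hs1 hfs
  by_cases he1 : s = s₁
  · exact Or.inl he1
  by_cases he2 : s = s₂
  · exact Or.inr he2
  exfalso
  have E : f s = s ^ 3 - p * s ^ 2 - q * b * (s - 1) := hf s
  have E1 : f s₁ = s₁ ^ 3 - p * s₁ ^ 2 - q * b * (s₁ - 1) := hf s₁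
  have E2 : f s₂ = s₂ ^ 3 - p * s₂ ^ 2 - q * b * (s₂ - 1) := hf s₂
  have z : s ^ 3 - p * s ^ 2 - q * b * (s - 1) = 0 := by rw [← E]; exact hfs
  have z1 : s₁ ^ 3 - p * s₁ ^ 2 - q * b * (s₁ - 1) = 0 := by rw [← E1]; exact hs₁
  have z2 : s₂ ^ 3 - p * s₂ ^ 2 - q * b * (s₂ - 1) = 0 := by rw [← E2]; exact hs₂
  have fac1 : (s - s₁) * (s ^ 2 + s * s₁ + s₁ ^ 2 - p * (s + s₁) - q * b) = 0 := by
    linear_combination z - z1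
  have fac2 : (s - s₂) * (s ^ 2 + s * s₂ + s₂ ^ 2 - p * (s + s₂) - q * b) = 0 := by
    linear_combination z - z2
  have hq1 : s ^ 2 + s * s₁ + s₁ ^ 2 - p * (s + s₁) - q * b = 0 :=
    (mul_eq_zero.1 fac1).resolve_left (sub_ne_zero.2 he1)
  have hq2 : s ^ 2 + s * s₂ + s₂ ^ 2 - p * (s + s₂) - q * b = 0 :=
    (mul_eq_zero.1 fac2).resolve_left (sub_ne_zero.2 he2)
  have fac3 : (s₁ - s₂) * (s + s₁ + s₂ - p) = 0 := by linear_combination hq1 - hq2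
  have hsum : s + s₁ + s₂ - p = 0 :=
    (mul_eq_zero.1 fac3).resolve_left (sub_ne_zero.2 (ne_of_lt hs₁s₂))
  linarith
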